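/- Deterministic-coefficient case of Proposition 1.1, pathwise representation of the trading costs: with D as defined, and D(s−) := γ(s)X(s−) + ν(s)^{−1}·(d − γ(t)x − ∫_t^s X(r)·(νγ)′(r) dr) for s∈[t,T], one has ∫_{[t,T]} D(s−) dX(s) + (1/2)·∫_{[t,T]} ΔX(s)·γ(s) dX(s) = (1/2)·( γ(T)^{−1} D(T)² − γ(t)^{−1} d² − ∫_t^T D(s)²·ν(s)²·(ν^{−2}γ^{−1})′(s) ds ). -/

import Mathlib

open MeasureTheory Set Filter

noncomputable section

lemma aux_integrable_of_bound {X : Type*} [MeasurableSpace X] {μ : Measure X}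
    [IsFiniteMeasure μ] {f : X → ℝ} (hf : AEStronglyMeasurable f μ) (C : ℝ)
    (h : ∀ᵐ a ∂μ, |f a| ≤ C) : Integrable f μ :=
  (integrable_const C).mono' hf (by simpa [Real.norm_eq_abs] using h)

lemma aux_stj_Iic (F : StieltjesFunction ℝ) {t T s : ℝ} (h1 : t ≤ s) (h2 : s ≤ T) :
    ((F.measure.restrict (Icc t T)) (Iic s)).toReal = F s - Function.leftLim F t := by
  rw [Measure.restrict_apply measurableSet_Iic]
  have hset : Iic s ∩ Icc t T = Icc t s := by
    ext r
    simp only [mem_inter_iff, mem_Iic, mem_Icc]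
    constructor
    · rintro ⟨hrs, hrt, -⟩; exact ⟨hrt, hrs⟩
    · rintro ⟨hrt, hrs⟩; exact ⟨hrs, hrt, hrs.trans h2⟩
  rw [hset, F.measure_Icc, ENNReal.toReal_ofReal (sub_nonneg.2 (F.mono.leftLim_le h1))]

lemma aux_stj_Iio (F : StieltjesFunction ℝ) {t T s : ℝ} (h1 : t ≤ s) (h2 : s ≤ T) :
    ((F.measure.restrict (Icc t T)) (Iio s)).toReal
      = Function.leftLim F s - Function.leftLim F t := by
  rw [Measure.restrict_apply measurableSet_Iio]
  have hset : Iio s ∩ Icc t T = Ico t s := by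
    ext r
    simp only [mem_inter_iff, mem_Iio, mem_Ico]
    constructor
    · rintro ⟨hrs, hrt, -⟩; exact ⟨hrt, hrs⟩
    · rintro ⟨hrt, hrs⟩; exact ⟨hrs, hrt, hrs.le.trans h2⟩
  rw [hset, F.measure_Ico]
  rcases eq_or_lt_of_le h1 with rfl | hlt
  · simp
  · exact ENNReal.toReal_ofReal
      (sub_nonneg.2 ((F.mono.leftLim_le le_rfl).trans (F.mono.le_leftLim hlt)))

lemma aux_stj_sing (F : StieltjesFunction ℝ) {t T s : ℝ} (h1 : t ≤ s) (h2 : s ≤ T) :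
    ((F.measure.restrict (Icc t T)) {s}).toReal = F s - Function.leftLim F s := by
  rw [Measure.restrict_apply (measurableSet_singleton s),
    Set.inter_eq_self_of_subset_left (singleton_subset_iff.2 (mem_Icc.mpr ⟨h1, h2⟩)),
    F.measure_singleton, ENNReal.toReal_ofReal (sub_nonneg.2 (F.mono.leftLim_le le_rfl))]

lemma aux_ae_prod {Xt Yt : Type*} [MeasurableSpace Xt] [MeasurableSpace Yt]
    {μ : Measure Xt} {ν : Measure Yt} [SFinite μ] [SFinite ν]
    {P : Set Xt} {Q : Set Yt} (hPm : MeasurableSet P) (hQm : MeasurableSet Q)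
    (hP : ∀ᵐ x ∂μ, x ∈ P) (hQ : ∀ᵐ y ∂ν, y ∈ Q) :
    ∀ᵐ z ∂(μ.prod ν), z.1 ∈ P ∧ z.2 ∈ Q := by
  have h1 : (μ.prod ν) (Pᶜ ×ˢ (univ : Set Yt)) = 0 := by
    rw [Measure.prod_prod]
    rw [ae_iff] at hP
    rw [show (Pᶜ : Set Xt) = {x | ¬ x ∈ P} from rfl, hP, zero_mul]
  have h2 : (μ.prod ν) ((univ : Set Xt) ×ˢ Qᶜ) = 0 := by
    rw [Measure.prod_prod]
    rw [ae_iff] at hQ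
    rw [show (Qᶜ : Set Yt) = {y | ¬ y ∈ Q} from rfl, hQ, mul_zero]
  rw [ae_iff]
  apply measure_mono_null _ (measure_union_null h1 h2)
  intro z hz
  simp only [mem_setOf_eq, not_and_or] at hz
  rcases hz with hz | hz
  · exact Or.inl ⟨hz, mem_univ _⟩
  · exact Or.inr ⟨mem_univ _, hz⟩

lemma aux_integrable_indicator' {Z : Type*} [MeasurableSpace Z] {μ : Measure Z}
    [IsFiniteMeasure μ] {S : Set Z} (hS : MeasurableSet S) {f : Z → ℝ} (hf : Measurable f)
    (C : ℝ) (hC : ∀ᵐ z ∂μ, |f z| ≤ C) : Integrable (S.indicator f) μ := by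
  apply aux_integrable_of_bound ((hf.indicator hS).aestronglyMeasurable) C
  filter_upwards [hC] with z hz
  calc |S.indicator f z| ≤ |f z| := by
        simpa [Real.norm_eq_abs] using norm_indicator_le_norm_self f z
    _ ≤ C := hz

lemma aux_integrable_indicator {μ : Measure (ℝ × ℝ)} [IsFiniteMeasure μ]
    {S : Set (ℝ × ℝ)} (hS : MeasurableSet S) {f : ℝ × ℝ → ℝ} (hf : Continuous f)
    (C : ℝ) (hC : ∀ᵐ z ∂μ, |f z| ≤ C) : Integrable (S.indicator f) μ := by
  apply aux_integrable_of_bound ((hf.measurable.indicator hS).aestronglyMeasurable) C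
  filter_upwards [hC] with z hz
  calc |S.indicator f z| ≤ |f z| := by
        simpa [Real.norm_eq_abs] using norm_indicator_le_norm_self f z
    _ ≤ C := hz

set_option maxHeartbeats 2000000

/-- deterministic-coefficient case of Proposition 1.1, pathwise
representation of the trading costs: with `X = A - B` a right-continuous function of
bounded variation on `[t,T]` (the convention `X(t-) = x` being encoded by
`leftLim A t - leftLim B t = x`), `ν(r) = exp(∫_t^r ρ)`,
`D(s) = γ(s) X(s) + ν(s)⁻¹ (d - γ(t) x - ∫_t^s X (νγ)')`, its left-limit version
`D₋(s) = γ(s) X(s-) + ν(s)⁻¹ (d - γ(t) x - ∫_t^s X (νγ)')`, and `w = (ν⁻²γ⁻¹)'`,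
one has
`∫_{[t,T]} D₋ dX + (1/2) ∫_{[t,T]} ΔX · γ dX
  = (1/2) (γ(T)⁻¹ D(T)² - γ(t)⁻¹ d² - ∫_t^T D(s)² ν(s)² w(s) ds)`. -/
theorem pathwise_cost_representation
    (t T x d : ℝ) (htT : t < T)
    (ρ γ γ' : ℝ → ℝ)
    (hρ : ContinuousOn ρ (Icc t T))
    (hγpos : ∀ s ∈ Icc t T, 0 < γ s)
    (hγderiv : ∀ s ∈ Icc t T, HasDerivAt γ (γ' s) s)
    (hγ'cont : ContinuousOn γ' (Icc t T))
    (A B : StieltjesFunction ℝ)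
    (hx : Function.leftLim A t - Function.leftLim B t = x)
    (X : ℝ → ℝ) (hX : ∀ s, X s = A s - B s)
    (ν : ℝ → ℝ) (hν : ∀ r, ν r = Real.exp (∫ s in t..r, ρ s))
    (D : ℝ → ℝ)
    (hD : ∀ r, D r = γ r * X r + (ν r)⁻¹ *
      (d - γ t * x - ∫ s in t..r, X s * (ν s * (ρ s * γ s + γ' s))))
    (Dm : ℝ → ℝ)
    (hDm : ∀ s, Dm s = γ s * Function.leftLim X s + (ν s)⁻¹ *
      (d - γ t * x - ∫ r in t..s, X r * (ν r * (ρ r * γ r + γ' r))))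
    (w : ℝ → ℝ)
    (hw : ∀ s ∈ Icc t T, HasDerivAt (fun r => ((ν r) ^ 2)⁻¹ * (γ r)⁻¹) (w s) s) :
    ((∫ s in Icc t T, Dm s ∂A.measure) - ∫ s in Icc t T, Dm s ∂B.measure)
      + (1/2) * ((∫ s in Icc t T, (X s - Function.leftLim X s) * γ s ∂A.measure)
          - ∫ s in Icc t T, (X s - Function.leftLim X s) * γ s ∂B.measure)
      = (1/2) * ((γ T)⁻¹ * D T ^ 2 - (γ t)⁻¹ * d ^ 2
          - ∫ s in t..T, D s ^ 2 * ν s ^ 2 * w s) := by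
  have hts : t ≤ T := htT.le
  -- the clamp to [t,T]
  set c : ℝ → ℝ := fun r => max t (min r T) with hc_def
  have hc_cont : Continuous c := continuous_const.max (continuous_id.min continuous_const)
  have hc_mem : ∀ r, c r ∈ Icc t T :=
    fun r => ⟨le_max_left _ _, max_le hts (min_le_right r T)⟩
  have hc_eq : ∀ r ∈ Icc t T, c r = r := by
    intro r hr
    simp only [hc_def]
    rw [min_eq_left hr.2, max_eq_right hr.1]
  have hγcont : ContinuousOn γ (Icc t T) :=
    fun s hs => ((hγderiv s hs).continuousAt).continuousWithinAt
  have hρc : Continuous fun r => ρ (c r) := hρ.comp_continuous hc_cont hc_mem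
  have hγc : Continuous fun r => γ (c r) := hγcont.comp_continuous hc_cont hc_mem
  have hγ'c : Continuous fun r => γ' (c r) := hγ'cont.comp_continuous hc_cont hc_mem
  have hγcpos : ∀ r, 0 < γ (c r) := fun r => hγpos _ (hc_mem r)
  -- the exponential integrating factor, globally defined
  set N : ℝ → ℝ := fun r => Real.exp (∫ u in t..r, ρ (c u)) with hN_def
  have hN_deriv : ∀ r, HasDerivAt N (ρ (c r) * N r) r := by
    intro r
    have h1 : HasDerivAt (fun r => ∫ u in t..r, ρ (c u)) (ρ (c r)) r :=
      intervalIntegral.integral_hasDerivAt_right (hρc.intervalIntegrable _ _)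
        hρc.stronglyMeasurable.stronglyMeasurableAtFilter hρc.continuousAt
    simpa [hN_def, mul_comm] using h1.exp
  have hN_pos : ∀ r, 0 < N r := fun r => Real.exp_pos _
  have hN_cont : Continuous N :=
    continuous_iff_continuousAt.2 fun r => (hN_deriv r).continuousAt
  have hNν : ∀ r ∈ Icc t T, N r = ν r := by
    intro r hr
    have heq : (∫ u in t..r, ρ (c u)) = ∫ u in t..r, ρ u := by
      apply intervalIntegral.integral_congr
      intro u hu
      rw [uIcc_of_le hr.1] at hu
      simp only [hc_eq u ⟨hu.1, hu.2.trans hr.2⟩]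
    simp only [hN_def]
    rw [heq, hν r]
  have hNt : N t = 1 := by simp [hN_def]
  -- h = ν γ and its derivative
  set h : ℝ → ℝ := fun r => N r * γ (c r) with hh_def
  have hh_cont : Continuous h := hN_cont.mul hγc
  have hh_eqIcc : ∀ r ∈ Icc t T, h r = ν r * γ r := by
    intro r hr; simp only [hh_def, hc_eq r hr, hNν r hr]
  set h' : ℝ → ℝ := fun r => N r * (ρ (c r) * γ (c r) + γ' (c r)) with hh'_def
  have hh'_cont : Continuous h' := hN_cont.mul ((hρc.mul hγc).add hγ'c)
  have hh'_eqIcc : ∀ r ∈ Icc t T, h' r = ν r * (ρ r * γ r + γ' r) := by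
    intro r hr; simp only [hh'_def, hc_eq r hr, hNν r hr]
  have hγc_deriv : ∀ r ∈ Ioo t T, HasDerivAt (fun u => γ (c u)) (γ' (c r)) r := by
    intro r hr
    have heq : (fun u => γ (c u)) =ᶠ[nhds r] γ := by
      filter_upwards [Ioo_mem_nhds hr.1 hr.2] with u hu
      rw [hc_eq u (Ioo_subset_Icc_self hu)]
    rw [hc_eq r (Ioo_subset_Icc_self hr)]
    exact (hγderiv r (Ioo_subset_Icc_self hr)).congr_of_eventuallyEq heq
  have hh_deriv : ∀ r ∈ Ioo t T, HasDerivAt h (h' r) r := by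
    intro r hr
    have := (hN_deriv r).mul (hγc_deriv r hr)
    simp only [Pi.mul_def] at this
    simp only [hh_def, hh'_def]
    exact this.congr_deriv (by ring)
  -- g = (ν²γ)⁻¹ and its derivative
  set g : ℝ → ℝ := fun r => ((N r) ^ 2 * γ (c r))⁻¹ with hg_def
  have hq_ne : ∀ r, (N r) ^ 2 * γ (c r) ≠ 0 := by
    intro r; exact (mul_pos (pow_pos (hN_pos r) 2) (hγcpos r)).ne'
  have hg_cont : Continuous g := ((hN_cont.pow 2).mul hγc).inv₀ hq_ne
  set W : ℝ → ℝ :=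
    fun r => -((N r) ^ 2 * (2 * ρ (c r) * γ (c r) + γ' (c r))) / ((N r) ^ 2 * γ (c r)) ^ 2
    with hW_def
  have hW_cont : Continuous W := by
    apply Continuous.div
    · exact ((hN_cont.pow 2).mul (((continuous_const.mul hρc).mul hγc).add hγ'c)).neg
    · exact ((hN_cont.pow 2).mul hγc).pow 2
    · intro r; exact pow_ne_zero 2 (hq_ne r)
  have hg_deriv : ∀ r ∈ Ioo t T, HasDerivAt g (W r) r := by
    intro r hr
    have hq : HasDerivAt (fun u => (N u) ^ 2 * γ (c u))
        ((N r) ^ 2 * (2 * ρ (c r) * γ (c r) + γ' (c r))) r := by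
      have := ((hN_deriv r).pow 2).mul (hγc_deriv r hr)
      simp only [Pi.mul_def, Pi.pow_def] at this
      exact this.congr_deriv (by ring)
    have := hq.inv (hq_ne r)
    simpa [hg_def, hW_def, neg_div, Pi.inv_def] using this
  have hg_eqIcc : ∀ r ∈ Icc t T, g r = ((ν r) ^ 2)⁻¹ * (γ r)⁻¹ := by
    intro r hr; simp only [hg_def, hc_eq r hr, hNν r hr, mul_inv]
  have hwW : ∀ r ∈ Ioo t T, w r = W r := by
    intro r hr
    have h1 : HasDerivAt g (w r) r := by
      have heq : g =ᶠ[nhds r] fun u => ((ν u) ^ 2)⁻¹ * (γ u)⁻¹ := by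
        filter_upwards [Icc_mem_nhds hr.1 hr.2] with u hu
        exact hg_eqIcc u hu
      exact (hw r (Ioo_subset_Icc_self hr)).congr_of_eventuallyEq heq
    exact h1.unique (hg_deriv r hr)
  have hφ : ∀ r ∈ Icc t T, g r * h r = (ν r)⁻¹ := by
    intro r hr
    have hN0 : N r ≠ 0 := (hN_pos r).ne'
    have hγ0 : γ (c r) ≠ 0 := (hγcpos r).ne'
    rw [← hNν r hr]
    simp only [hg_def, hh_def]
    field_simp
  have hν_pos : ∀ r, 0 < ν r := fun r => (hν r) ▸ Real.exp_pos _
  -- FTC for h and g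
  have hFTCh : ∀ a b, t ≤ a → a ≤ b → b ≤ T → (∫ r in a..b, h' r) = h b - h a := by
    intro a b h1 h2 h3
    apply intervalIntegral.integral_eq_sub_of_hasDeriv_right_of_le h2
      hh_cont.continuousOn
    · intro r hr
      exact (hh_deriv r ⟨h1.trans_lt hr.1, hr.2.trans_le h3⟩).hasDerivWithinAt
    · exact hh'_cont.intervalIntegrable _ _
  have hFTCg : ∀ a b, t ≤ a → a ≤ b → b ≤ T → (∫ r in a..b, W r) = g b - g a := by
    intro a b h1 h2 h3
    apply intervalIntegral.integral_eq_sub_of_hasDeriv_right_of_le h2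
      hg_cont.continuousOn
    · intro r hr
      exact (hg_deriv r ⟨h1.trans_lt hr.1, hr.2.trans_le h3⟩).hasDerivWithinAt
    · exact hW_cont.intervalIntegrable _ _
  -- bounds
  obtain ⟨Ch, hCh⟩ := (isCompact_Icc : IsCompact (Icc t T)).exists_bound_of_continuousOn
    hh_cont.continuousOn
  obtain ⟨Cg, hCg⟩ := (isCompact_Icc : IsCompact (Icc t T)).exists_bound_of_continuousOn
    hg_cont.continuousOn
  obtain ⟨CW, hCW⟩ := (isCompact_Icc : IsCompact (Icc t T)).exists_bound_of_continuousOn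
    hW_cont.continuousOn
  obtain ⟨Ch', hCh'⟩ := (isCompact_Icc : IsCompact (Icc t T)).exists_bound_of_continuousOn
    hh'_cont.continuousOn
  -- the measures
  set μ1 : Measure ℝ := A.measure.restrict (Icc t T) with hμ1_def
  set μ2 : Measure ℝ := B.measure.restrict (Icc t T) with hμ2_def
  set Λ : Measure ℝ := volume.restrict (Ioc t T) with hΛ_def
  haveI hfin1 : IsFiniteMeasure μ1 := by
    constructor
    rw [hμ1_def, Measure.restrict_apply_univ, A.measure_Icc]
    exact ENNReal.ofReal_lt_top
  haveI hfin2 : IsFiniteMeasure μ2 := by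
    constructor
    rw [hμ2_def, Measure.restrict_apply_univ, B.measure_Icc]
    exact ENNReal.ofReal_lt_top
  haveI hfinΛ : IsFiniteMeasure Λ := by
    constructor
    rw [hΛ_def, Measure.restrict_apply_univ, Real.volume_Ioc]
    exact ENNReal.ofReal_lt_top
  -- almost-everywhere membership
  have hae1 : ∀ᵐ u ∂μ1, u ∈ Icc t T := ae_restrict_mem measurableSet_Icc
  have hae2 : ∀ᵐ u ∂μ2, u ∈ Icc t T := ae_restrict_mem measurableSet_Icc
  have haeΛ : ∀ᵐ u ∂Λ, u ∈ Ioc t T := ae_restrict_mem measurableSet_Ioc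
  -- left limit of X
  have hXleft : ∀ s, Function.leftLim X s
      = Function.leftLim A s - Function.leftLim B s := by
    intro s
    have hfun : X = fun u => A u - B u := funext hX
    have hne : (nhdsWithin s (Iio s)).NeBot := inferInstance
    apply leftLim_eq_of_tendsto
    rw [hfun]
    exact (A.mono.tendsto_leftLim s).sub (B.mono.tendsto_leftLim s)
  -- values of X in terms of the measures
  have hXval : ∀ s ∈ Icc t T, X s = x + ((μ1 (Iic s)).toReal - (μ2 (Iic s)).toReal) := by
    intro s hs
    rw [hμ1_def, hμ2_def, aux_stj_Iic A hs.1 hs.2, aux_stj_Iic B hs.1 hs.2, hX s, ← hx]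
    ring
  have hXjump : ∀ s ∈ Icc t T,
      X s - Function.leftLim X s = (μ1 {s}).toReal - (μ2 {s}).toReal := by
    intro s hs
    rw [hμ1_def, hμ2_def, aux_stj_sing A hs.1 hs.2, aux_stj_sing B hs.1 hs.2, hX s,
      hXleft s]
    ring
  -- the fundamental integral identity
  have hIicmono : ∀ (μ : Measure ℝ), IsFiniteMeasure μ →
      Monotone (fun r => (μ (Iic r)).toReal) := by
    intro μ hμ a b hab
    haveI := hμ
    exact ENNReal.toReal_mono (measure_ne_top _ _) (measure_mono (Iic_subset_Iic.2 hab))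
  have hIicbd : ∀ (μ : Measure ℝ), IsFiniteMeasure μ → ∀ r : ℝ,
      |(μ (Iic r)).toReal| ≤ (μ univ).toReal := by
    intro μ hμ r
    haveI := hμ
    rw [abs_of_nonneg ENNReal.toReal_nonneg]
    exact ENNReal.toReal_mono (measure_ne_top _ _) (measure_mono (subset_univ _))
  have hIndInt : ∀ (μ : Measure ℝ), IsFiniteMeasure μ → (∀ᵐ u ∂μ, u ∈ Icc t T) →
      ∀ (S : Set ℝ), MeasurableSet S →
      Integrable (S.indicator h) μ := by
    intro μ hμ hmem S hS
    haveI := hμ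
    apply aux_integrable_of_bound ((hh_cont.measurable.indicator hS).aestronglyMeasurable) Ch
    filter_upwards [hmem] with u hu
    calc |S.indicator h u| ≤ |h u| := by
          simpa [Real.norm_eq_abs] using norm_indicator_le_norm_self h u
      _ ≤ Ch := by simpa [Real.norm_eq_abs] using hCh u hu
  set I1 : ℝ → ℝ := fun s => ∫ u, (Iic s).indicator h u ∂μ1 with hI1_def
  set I2 : ℝ → ℝ := fun s => ∫ u, (Iic s).indicator h u ∂μ2 with hI2_def
  set J1 : ℝ → ℝ := fun s => ∫ u, (Iio s).indicator h u ∂μ1 with hJ1_def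
  set J2 : ℝ → ℝ := fun s => ∫ u, (Iio s).indicator h u ∂μ2 with hJ2_def
  have hE : ∀ s ∈ Icc t T,
      (∫ r in t..s, X r * (ν r * (ρ r * γ r + γ' r)))
        = h s * X s - γ t * x - (I1 s - I2 s) := by
    intro s hs
    obtain ⟨hts', hsT⟩ := hs
    have e1 : (∫ r in t..s, X r * (ν r * (ρ r * γ r + γ' r)))
        = ∫ r in t..s,
            (x * h' r + ((μ1 (Iic r)).toReal * h' r - (μ2 (Iic r)).toReal * h' r)) := by
      apply intervalIntegral.integral_congr
      intro r hr
      rw [uIcc_of_le hts'] at hr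
      have hrIcc : r ∈ Icc t T := ⟨hr.1, hr.2.trans hsT⟩
      show X r * (ν r * (ρ r * γ r + γ' r))
        = x * h' r + ((μ1 (Iic r)).toReal * h' r - (μ2 (Iic r)).toReal * h' r)
      rw [← hh'_eqIcc r hrIcc, hXval r hrIcc]
      ring
    haveI hfinΛs : IsFiniteMeasure (volume.restrict (Ioc t s)) := by
      constructor
      rw [Measure.restrict_apply_univ, Real.volume_Ioc]
      exact ENNReal.ofReal_lt_top
    have hII : ∀ (μ : Measure ℝ), IsFiniteMeasure μ →
        IntervalIntegrable (fun r => (μ (Iic r)).toReal * h' r) volume t s := by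
      intro μ hμ
      haveI := hμ
      rw [intervalIntegrable_iff_integrableOn_Ioc_of_le hts']
      apply aux_integrable_of_bound
        (((hIicmono μ hμ).measurable.mul hh'_cont.measurable).aestronglyMeasurable)
        ((μ univ).toReal * Ch')
      filter_upwards [ae_restrict_mem measurableSet_Ioc] with r hr
      rw [Pi.mul_apply, abs_mul]
      exact mul_le_mul (hIicbd μ hμ r)
        (by simpa [Real.norm_eq_abs] using hCh' r ⟨hr.1.le, hr.2.trans hsT⟩)
        (abs_nonneg _) ENNReal.toReal_nonneg
    have e2 : (∫ r in t..s,
          (x * h' r + ((μ1 (Iic r)).toReal * h' r - (μ2 (Iic r)).toReal * h' r)))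
        = x * (h s - h t) + ((∫ r in t..s, (μ1 (Iic r)).toReal * h' r)
            - ∫ r in t..s, (μ2 (Iic r)).toReal * h' r) := by
      rw [intervalIntegral.integral_add ((hh'_cont.intervalIntegrable _ _).const_mul x)
          ((hII μ1 hfin1).sub (hII μ2 hfin2)),
        intervalIntegral.integral_sub (hII μ1 hfin1) (hII μ2 hfin2),
        intervalIntegral.integral_const_mul, hFTCh t s le_rfl hts' hsT]
    have e3 : ∀ (μ : Measure ℝ), IsFiniteMeasure μ → (∀ᵐ u ∂μ, u ∈ Icc t T) →
        (∫ r in t..s, (μ (Iic r)).toReal * h' r)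
          = ∫ u, (Iic s).indicator (fun v => h s - h v) u ∂μ := by
      intro μ hμ hmem
      haveI := hμ
      set Λs : Measure ℝ := volume.restrict (Ioc t s) with hΛs_def
      set K : ℝ × ℝ → ℝ := {p : ℝ × ℝ | p.2 ≤ p.1}.indicator (fun p => h' p.1) with hK_def
      have hKint : Integrable K (Λs.prod μ) := by
        apply aux_integrable_indicator (measurableSet_le measurable_snd measurable_fst)
          (hh'_cont.comp continuous_fst) Ch'
        filter_upwards [aux_ae_prod measurableSet_Ioc measurableSet_Icc
          (ae_restrict_mem measurableSet_Ioc) hmem] with z hz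
        simpa [Real.norm_eq_abs] using hCh' z.1 ⟨hz.1.1.le, hz.1.2.trans hsT⟩
      have estep1 : (∫ r in t..s, (μ (Iic r)).toReal * h' r)
          = ∫ r, (∫ u, K (r, u) ∂μ) ∂Λs := by
        rw [intervalIntegral.integral_of_le hts']
        apply integral_congr_ae
        apply Eventually.of_forall
        intro r
        have hKr : ∀ u, K (r, u) = (Iic r).indicator (fun _ => h' r) u := by
          intro u
          simp only [hK_def, Set.indicator_apply, mem_setOf_eq, mem_Iic]
        simp_rw [hKr]
        rw [integral_indicator_const _ measurableSet_Iic, smul_eq_mul, measureReal_def, mul_comm]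
      have estep2 : (∫ r, (∫ u, K (r, u) ∂μ) ∂Λs) = ∫ u, (∫ r, K (r, u) ∂Λs) ∂μ :=
        integral_integral_swap hKint
      rw [estep1, estep2]
      apply integral_congr_ae
      filter_upwards [hmem] with u hu
      have h0 : Λs {u} = 0 := by
        have h1 : Λs {u} ≤ volume {u} := Measure.le_iff'.1 Measure.restrict_le_self {u}
        simpa [Real.volume_singleton] using le_antisymm h1 (zero_le _)
      have hne : ∀ᵐ r ∂Λs, r ≠ u := by
        rw [ae_iff]
        apply measure_mono_null _ h0
        intro r hr
        simp only [mem_setOf_eq, not_not] at hr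
        simp [hr]
      calc ∫ r, K (r, u) ∂Λs
          = ∫ r, (Ioi u).indicator h' r ∂Λs := by
            apply integral_congr_ae
            filter_upwards [hne] with r hru
            simp only [hK_def, Set.indicator_apply, mem_setOf_eq, mem_Ioi]
            by_cases hur : u ≤ r
            · have hlt : u < r := lt_of_le_of_ne hur (Ne.symm hru)
              simp [hur, hlt]
            · have hnl : ¬ u < r := fun hl => hur hl.le
              simp [hur, hnl]
        _ = ∫ r in Ioi u, h' r ∂Λs := integral_indicator measurableSet_Ioi
        _ = ∫ r in Ioc u s, h' r := by
            have hset : Ioi u ∩ Ioc t s = Ioc u s := by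
              ext r
              simp only [mem_inter_iff, mem_Ioi, mem_Ioc]
              constructor
              · rintro ⟨h1, h2, h3⟩; exact ⟨h1, h3⟩
              · rintro ⟨h1, h2⟩; exact ⟨h1, hu.1.trans_lt h1, h2⟩
            rw [hΛs_def, Measure.restrict_restrict measurableSet_Ioi, hset]
        _ = (Iic s).indicator (fun v => h s - h v) u := by
            by_cases hus : u ≤ s
            · rw [← intervalIntegral.integral_of_le hus, hFTCh u s hu.1 hus hsT]
              simp [Set.indicator_apply, hus]
            · have hempty : Ioc u s = ∅ := Ioc_eq_empty (fun hl => hus hl.le)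
              simp [hempty, Set.indicator_apply, hus]
    have e4 : ∀ (μ : Measure ℝ), IsFiniteMeasure μ → (∀ᵐ u ∂μ, u ∈ Icc t T) →
        (∫ u, (Iic s).indicator (fun v => h s - h v) u ∂μ)
          = h s * (μ (Iic s)).toReal - ∫ u, (Iic s).indicator h u ∂μ := by
      intro μ hμ hmem
      haveI := hμ
      have hint1 : Integrable ((Iic s).indicator (fun _ : ℝ => h s)) μ :=
        (integrable_const (h s)).indicator measurableSet_Iic
      have hint2 : Integrable ((Iic s).indicator h) μ :=
        hIndInt μ hμ hmem (Iic s) measurableSet_Iic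
      have hptw : ∀ u, (Iic s).indicator (fun v => h s - h v) u
          = (Iic s).indicator (fun _ => h s) u - (Iic s).indicator h u := by
        intro u
        simp only [Set.indicator_apply]
        by_cases hus : u ∈ Iic s <;> simp [hus]
      simp_rw [hptw]
      rw [integral_sub hint1 hint2, integral_indicator_const _ measurableSet_Iic,
        smul_eq_mul, mul_comm, measureReal_def]
    have hht : h t = γ t := by
      simp [hh_def, hNt, hc_eq t ⟨le_rfl, hts⟩]
    simp only [hI1_def, hI2_def]
    rw [e1, e2, e3 μ1 hfin1 hae1, e3 μ2 hfin2 hae2, e4 μ1 hfin1 hae1, e4 μ2 hfin2 hae2,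
      hXval s ⟨hts', hsT⟩, hht]
    ring
  -- relation between Iic- and Iio-indicator integrals
  have hIJ : ∀ (μ : Measure ℝ), IsFiniteMeasure μ → (∀ᵐ u ∂μ, u ∈ Icc t T) → ∀ s : ℝ,
      (∫ u, (Iic s).indicator h u ∂μ) - (∫ u, (Iio s).indicator h u ∂μ)
        = h s * (μ {s}).toReal := by
    intro μ hμ hmem s
    haveI := hμ
    have hptw : ∀ u, (Iic s).indicator h u - (Iio s).indicator h u
        = ({s} : Set ℝ).indicator (fun _ => h s) u := by
      intro u
      simp only [Set.indicator_apply, mem_Iic, mem_Iio, mem_singleton_iff]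
      rcases lt_trichotomy u s with hlt | rfl | hgt
      · simp [hlt.le, hlt, hlt.ne]
      · simp
      · simp [not_le.2 hgt, lt_asymm hgt, hgt.ne']
    rw [← integral_sub (hIndInt μ hμ hmem (Iic s) measurableSet_Iic)
        (hIndInt μ hμ hmem (Iio s) measurableSet_Iio)]
    simp_rw [hptw]
    rw [integral_indicator_const _ (measurableSet_singleton s), smul_eq_mul, mul_comm,
      measureReal_def]
  -- formulas for D and Dm
  have hDf : ∀ s ∈ Icc t T, D s = g s * h s * (d + (I1 s - I2 s)) := by
    intro s hs
    rw [hD s, hE s hs, hφ s hs, hh_eqIcc s hs]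
    field_simp [(hν_pos s).ne']
    ring
  have hDmf : ∀ s ∈ Icc t T, Dm s = g s * h s * (d + (J1 s - J2 s)) := by
    intro s hs
    have h1 := hIJ μ1 hfin1 hae1 s
    have h2 := hIJ μ2 hfin2 hae2 s
    have e0 : J1 s - J2 s = (I1 s - I2 s) - h s * (X s - Function.leftLim X s) := by
      simp only [hI1_def, hI2_def, hJ1_def, hJ2_def]
      rw [hXjump s hs]
      linarith [h1, h2]
    rw [hDm s, hE s hs, hφ s hs, e0, hh_eqIcc s hs]
    field_simp [(hν_pos s).ne']
    ring
  -- nonnegativity of the bounds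
  have hCh0 : 0 ≤ Ch := le_trans (norm_nonneg _) (hCh t ⟨le_rfl, hts⟩)
  have hCg0 : 0 ≤ Cg := le_trans (norm_nonneg _) (hCg t ⟨le_rfl, hts⟩)
  have hCW0 : 0 ≤ CW := le_trans (norm_nonneg _) (hCW t ⟨le_rfl, hts⟩)
  have habs : ∀ a ∈ Icc t T, |h a| ≤ Ch := fun a ha => by
    simpa [Real.norm_eq_abs] using hCh a ha
  have gabs : ∀ a ∈ Icc t T, |g a| ≤ Cg := fun a ha => by
    simpa [Real.norm_eq_abs] using hCg a ha
  have Wabs : ∀ a ∈ Icc t T, |W a| ≤ CW := fun a ha => by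
    simpa [Real.norm_eq_abs] using hCW a ha
  -- the kernels
  set klt : ℝ × ℝ → ℝ :=
    {p : ℝ × ℝ | p.2 < p.1}.indicator (fun p => g p.1 * h p.1 * h p.2) with hklt_def
  set keq : ℝ × ℝ → ℝ :=
    {p : ℝ × ℝ | p.2 = p.1}.indicator (fun p => g p.1 * h p.1 * h p.2) with hkeq_def
  set kmax : ℝ × ℝ → ℝ := fun p => g (max p.1 p.2) * h p.1 * h p.2 with hkmax_def
  have hghh_bound : ∀ z : ℝ × ℝ, z.1 ∈ Icc t T → z.2 ∈ Icc t T →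
      |g z.1 * h z.1 * h z.2| ≤ Cg * Ch * Ch := by
    intro z h1 h2
    rw [abs_mul, abs_mul]
    exact mul_le_mul (mul_le_mul (gabs _ h1) (habs _ h1) (abs_nonneg _) hCg0)
      (habs _ h2) (abs_nonneg _) (mul_nonneg hCg0 hCh0)
  have hkltInt : ∀ (α β : Measure ℝ), IsFiniteMeasure α → IsFiniteMeasure β →
      (∀ᵐ u ∂α, u ∈ Icc t T) → (∀ᵐ u ∂β, u ∈ Icc t T) →
      Integrable klt (α.prod β) := by
    intro α β hα hβ hmα hmβ
    haveI := hα; haveI := hβ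
    apply aux_integrable_indicator (measurableSet_lt measurable_snd measurable_fst)
      (((hg_cont.comp continuous_fst).mul (hh_cont.comp continuous_fst)).mul
        (hh_cont.comp continuous_snd)) (Cg * Ch * Ch)
    filter_upwards [aux_ae_prod measurableSet_Icc measurableSet_Icc hmα hmβ] with z hz
    exact hghh_bound z hz.1 hz.2
  have hkeqInt : ∀ (α β : Measure ℝ), IsFiniteMeasure α → IsFiniteMeasure β →
      (∀ᵐ u ∂α, u ∈ Icc t T) → (∀ᵐ u ∂β, u ∈ Icc t T) →
      Integrable keq (α.prod β) := by
    intro α β hα hβ hmα hmβ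
    haveI := hα; haveI := hβ
    apply aux_integrable_indicator (measurableSet_eq_fun measurable_snd measurable_fst)
      (((hg_cont.comp continuous_fst).mul (hh_cont.comp continuous_fst)).mul
        (hh_cont.comp continuous_snd)) (Cg * Ch * Ch)
    filter_upwards [aux_ae_prod measurableSet_Icc measurableSet_Icc hmα hmβ] with z hz
    exact hghh_bound z hz.1 hz.2
  have hkmaxInt : ∀ (α β : Measure ℝ), IsFiniteMeasure α → IsFiniteMeasure β →
      (∀ᵐ u ∂α, u ∈ Icc t T) → (∀ᵐ u ∂β, u ∈ Icc t T) →
      Integrable kmax (α.prod β) := by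
    intro α β hα hβ hmα hmβ
    haveI := hα; haveI := hβ
    have hcontk : Continuous kmax :=
      ((hg_cont.comp (continuous_fst.max continuous_snd)).mul
        (hh_cont.comp continuous_fst)).mul (hh_cont.comp continuous_snd)
    apply aux_integrable_of_bound hcontk.measurable.aestronglyMeasurable (Cg * Ch * Ch)
    filter_upwards [aux_ae_prod measurableSet_Icc measurableSet_Icc hmα hmβ] with z hz
    simp only [hkmax_def]
    rw [abs_mul, abs_mul]
    refine mul_le_mul (mul_le_mul (gabs _ ?_) (habs _ hz.1) (abs_nonneg _) hCg0)
      (habs _ hz.2) (abs_nonneg _) (mul_nonneg hCg0 hCh0)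
    exact ⟨le_trans hz.1.1 (le_max_left _ _), max_le hz.1.2 hz.2.2⟩
  -- inner integral identities
  have hkltInner : ∀ (s : ℝ) (μ : Measure ℝ),
      g s * h s * (∫ u, (Iio s).indicator h u ∂μ) = ∫ u, klt (s, u) ∂μ := by
    intro s μ
    rw [← integral_const_mul]
    apply integral_congr_ae
    apply Eventually.of_forall
    intro u
    simp only [hklt_def, Set.indicator_apply, mem_Iio, mem_setOf_eq]
    by_cases hu : u < s <;> simp [hu, mul_assoc]
  have hkeqInner : ∀ (s : ℝ) (μ : Measure ℝ), IsFiniteMeasure μ →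
      (∫ u, keq (s, u) ∂μ) = g s * h s * h s * (μ {s}).toReal := by
    intro s μ hμ
    haveI := hμ
    have hptw : ∀ u, keq (s, u) = ({s} : Set ℝ).indicator (fun _ => g s * h s * h s) u := by
      intro u
      simp only [hkeq_def, Set.indicator_apply, mem_setOf_eq, mem_singleton_iff]
      by_cases hu : u = s
      · subst hu; simp
      · simp [hu]
    simp_rw [hptw]
    rw [integral_indicator_const _ (measurableSet_singleton s), smul_eq_mul, mul_comm,
      measureReal_def]
  -- integrability of g*h on a finite measure carried on [t,T]
  have hghInt : ∀ (μ : Measure ℝ), IsFiniteMeasure μ → (∀ᵐ u ∂μ, u ∈ Icc t T) →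
      Integrable (fun s => g s * h s) μ := by
    intro μ hμ hmem
    haveI := hμ
    apply aux_integrable_of_bound (hg_cont.mul hh_cont).measurable.aestronglyMeasurable
      (Cg * Ch)
    filter_upwards [hmem] with u hu
    rw [Pi.mul_apply, abs_mul]
    exact mul_le_mul (gabs _ hu) (habs _ hu) (abs_nonneg _) hCg0
  -- decomposition of the Dm-integrals
  have hDmInt : ∀ (μ : Measure ℝ), IsFiniteMeasure μ → (∀ᵐ u ∂μ, u ∈ Icc t T) →
      (∫ s, Dm s ∂μ) = d * (∫ s, g s * h s ∂μ)
        + ((∫ z, klt z ∂(μ.prod μ1)) - ∫ z, klt z ∂(μ.prod μ2)) := by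
    intro μ hμ hmem
    haveI := hμ
    have e1 : (∫ s, Dm s ∂μ)
        = ∫ s, (d * (g s * h s) + ((∫ u, klt (s, u) ∂μ1) - ∫ u, klt (s, u) ∂μ2)) ∂μ := by
      apply integral_congr_ae
      filter_upwards [hmem] with s hsIcc
      rw [hDmf s hsIcc, ← hkltInner s μ1, ← hkltInner s μ2]
      simp only [hJ1_def, hJ2_def]
      ring
    have hintA : Integrable (fun s => ∫ u, klt (s, u) ∂μ1) μ :=
      (hkltInt μ μ1 hμ hfin1 hmem hae1).integral_prod_left
    have hintB : Integrable (fun s => ∫ u, klt (s, u) ∂μ2) μ :=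
      (hkltInt μ μ2 hμ hfin2 hmem hae2).integral_prod_left
    have hintAB : Integrable
        (fun s => (∫ u, klt (s, u) ∂μ1) - ∫ u, klt (s, u) ∂μ2) μ := hintA.sub hintB
    rw [e1, integral_add ((hghInt μ hμ hmem).const_mul d) hintAB,
      integral_sub hintA hintB, integral_const_mul,
      integral_prod _ (hkltInt μ μ1 hμ hfin1 hmem hae1),
      integral_prod _ (hkltInt μ μ2 hμ hfin2 hmem hae2)]
  -- γ as g·h·h on [t,T]
  have hγghh : ∀ s ∈ Icc t T, γ s = g s * h s * h s := by
    intro s hs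
    rw [hφ s hs, hh_eqIcc s hs]
    field_simp [(hν_pos s).ne']
  -- decomposition of the jump integrals
  have hJumpInt : ∀ (μ : Measure ℝ), IsFiniteMeasure μ → (∀ᵐ u ∂μ, u ∈ Icc t T) →
      (∫ s, (X s - Function.leftLim X s) * γ s ∂μ)
        = (∫ z, keq z ∂(μ.prod μ1)) - ∫ z, keq z ∂(μ.prod μ2) := by
    intro μ hμ hmem
    haveI := hμ
    have e1 : (∫ s, (X s - Function.leftLim X s) * γ s ∂μ)
        = ∫ s, ((∫ u, keq (s, u) ∂μ1) - ∫ u, keq (s, u) ∂μ2) ∂μ := by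
      apply integral_congr_ae
      filter_upwards [hmem] with s hsIcc
      rw [hkeqInner s μ1 hfin1, hkeqInner s μ2 hfin2, hXjump s hsIcc, hγghh s hsIcc]
      ring
    have hintA : Integrable (fun s => ∫ u, keq (s, u) ∂μ1) μ :=
      (hkeqInt μ μ1 hμ hfin1 hmem hae1).integral_prod_left
    have hintB : Integrable (fun s => ∫ u, keq (s, u) ∂μ2) μ :=
      (hkeqInt μ μ2 hμ hfin2 hmem hae2).integral_prod_left
    rw [e1, integral_sub hintA hintB,
      integral_prod _ (hkeqInt μ μ1 hμ hfin1 hmem hae1),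
      integral_prod _ (hkeqInt μ μ2 hμ hfin2 hmem hae2)]
  -- the symmetrization identity
  have hsum : ∀ z : ℝ × ℝ, kmax z = klt z + klt z.swap + keq z := by
    intro z
    rcases lt_trichotomy z.2 z.1 with hlt | heq | hgt
    · simp only [hkmax_def, hklt_def, hkeq_def, Set.indicator_apply, mem_setOf_eq,
        Prod.fst_swap, Prod.snd_swap]
      rw [if_pos hlt, if_neg (lt_asymm hlt), if_neg hlt.ne, max_eq_left hlt.le]
      ring
    · simp only [hkmax_def, hklt_def, hkeq_def, Set.indicator_apply, mem_setOf_eq,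
        Prod.fst_swap, Prod.snd_swap]
      rw [if_neg (heq ▸ lt_irrefl _), if_neg (heq ▸ lt_irrefl _), if_pos heq, heq,
        max_self]
      ring
    · simp only [hkmax_def, hklt_def, hkeq_def, Set.indicator_apply, mem_setOf_eq,
        Prod.fst_swap, Prod.snd_swap]
      rw [if_neg (lt_asymm hgt), if_pos hgt, if_neg hgt.ne', max_eq_right hgt.le]
      ring
  have hpair : ∀ (α β : Measure ℝ), IsFiniteMeasure α → IsFiniteMeasure β →
      (∀ᵐ u ∂α, u ∈ Icc t T) → (∀ᵐ u ∂β, u ∈ Icc t T) →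
      (∫ z, klt z ∂(α.prod β)) + (∫ z, klt z ∂(β.prod α)) + (∫ z, keq z ∂(α.prod β))
        = ∫ z, kmax z ∂(α.prod β) := by
    intro α β hα hβ hmα hmβ
    haveI := hα; haveI := hβ
    have hswapInt : Integrable (fun z : ℝ × ℝ => klt z.swap) (α.prod β) :=
      (hkltInt β α hβ hα hmβ hmα).swap
    have hsum1 : Integrable (fun z : ℝ × ℝ => klt z + klt z.swap) (α.prod β) :=
      (hkltInt α β hα hβ hmα hmβ).add hswapInt
    have e1 : (∫ z, kmax z ∂(α.prod β))
        = ((∫ z, klt z ∂(α.prod β)) + (∫ z, klt z.swap ∂(α.prod β)))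
          + ∫ z, keq z ∂(α.prod β) :=
      calc (∫ z, kmax z ∂(α.prod β))
          = ∫ z, (klt z + klt z.swap) + keq z ∂(α.prod β) :=
            integral_congr_ae (Eventually.of_forall hsum)
        _ = (∫ z, klt z + klt z.swap ∂(α.prod β)) + ∫ z, keq z ∂(α.prod β) :=
            integral_add hsum1 (hkeqInt α β hα hβ hmα hmβ)
        _ = ((∫ z, klt z ∂(α.prod β)) + (∫ z, klt z.swap ∂(α.prod β)))
            + ∫ z, keq z ∂(α.prod β) :=
            congrArg (fun r => r + ∫ z, keq z ∂(α.prod β))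
              (integral_add (hkltInt α β hα hβ hmα hmβ) hswapInt)
    rw [e1, integral_prod_swap klt]
  have hkeq_swap : ∀ z : ℝ × ℝ, keq z.swap = keq z := by
    intro z
    simp only [hkeq_def, Set.indicator_apply, mem_setOf_eq, Prod.fst_swap, Prod.snd_swap]
    by_cases hz : z.2 = z.1
    · rw [if_pos hz.symm, if_pos hz, hz]
    · rw [if_neg (fun hc => hz hc.symm), if_neg hz]
  have hEsym : (∫ z, keq z ∂(μ2.prod μ1)) = ∫ z, keq z ∂(μ1.prod μ2) := by
    rw [← integral_prod_swap keq]
    apply integral_congr_ae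
    exact Eventually.of_forall fun z => hkeq_swap z
  -- ======= RHS side =======
  have hTmem : T ∈ Icc t T := ⟨hts, le_rfl⟩
  have htmem : t ∈ Icc t T := ⟨le_rfl, hts⟩
  have haeΛ' : ∀ᵐ u ∂Λ, u ∈ Icc t T := haeΛ.mono fun u hu => ⟨hu.1.le, hu.2⟩
  have hhInt : ∀ (μ : Measure ℝ), IsFiniteMeasure μ → (∀ᵐ u ∂μ, u ∈ Icc t T) →
      Integrable h μ := by
    intro μ hμ hmem
    haveI := hμ
    apply aux_integrable_of_bound hh_cont.measurable.aestronglyMeasurable Ch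
    filter_upwards [hmem] with u hu
    exact habs u hu
  -- the Iic T indicator is h itself a.e.
  have hITfull : ∀ (μ : Measure ℝ), IsFiniteMeasure μ → (∀ᵐ u ∂μ, u ∈ Icc t T) →
      (∫ u, (Iic T).indicator h u ∂μ) = ∫ u, h u ∂μ := by
    intro μ hμ hmem
    haveI := hμ
    apply integral_congr_ae
    filter_upwards [hmem] with u hu
    exact Set.indicator_of_mem (mem_Iic.2 hu.2) h
  have hgTf : (γ T)⁻¹ * D T ^ 2 = g T * (d + (I1 T - I2 T)) ^ 2 := by
    rw [hDf T hTmem, mul_pow, hφ T hTmem, hg_eqIcc T hTmem, inv_pow]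
    ring
  have hgtf : g t = (γ t)⁻¹ := by
    rw [hg_def]
    simp only [hNt, hc_eq t htmem, one_pow, one_mul]
  -- kernels against Lebesgue measure
  set kW : ℝ × ℝ → ℝ :=
    {p : ℝ × ℝ | p.2 ≤ p.1}.indicator (fun p => W p.1 * h p.2) with hkW_def
  set kW2 : ℝ × (ℝ × ℝ) → ℝ :=
    {q : ℝ × (ℝ × ℝ) | q.2.1 ≤ q.1 ∧ q.2.2 ≤ q.1}.indicator
      (fun q => W q.1 * (h q.2.1 * h q.2.2)) with hkW2_def
  have hkWInt : ∀ (μ : Measure ℝ), IsFiniteMeasure μ → (∀ᵐ u ∂μ, u ∈ Icc t T) →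
      Integrable kW (Λ.prod μ) := by
    intro μ hμ hmem
    haveI := hμ
    apply aux_integrable_indicator (measurableSet_le measurable_snd measurable_fst)
      ((hW_cont.comp continuous_fst).mul (hh_cont.comp continuous_snd)) (CW * Ch)
    filter_upwards [aux_ae_prod measurableSet_Icc measurableSet_Icc haeΛ' hmem] with z hz
    rw [Pi.mul_apply, abs_mul]
    exact mul_le_mul (Wabs _ hz.1) (habs _ hz.2) (abs_nonneg _) hCW0
  have hkW2Int : ∀ (α β : Measure ℝ), IsFiniteMeasure α → IsFiniteMeasure β →
      (∀ᵐ u ∂α, u ∈ Icc t T) → (∀ᵐ u ∂β, u ∈ Icc t T) →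
      Integrable kW2 (Λ.prod (α.prod β)) := by
    intro α β hα hβ hmα hmβ
    haveI := hα; haveI := hβ
    have hSm : MeasurableSet {q : ℝ × (ℝ × ℝ) | q.2.1 ≤ q.1 ∧ q.2.2 ≤ q.1} := by
      have h1 : MeasurableSet {q : ℝ × (ℝ × ℝ) | q.2.1 ≤ q.1} :=
        measurableSet_le (measurable_fst.comp measurable_snd) measurable_fst
      have h2 : MeasurableSet {q : ℝ × (ℝ × ℝ) | q.2.2 ≤ q.1} :=
        measurableSet_le (measurable_snd.comp measurable_snd) measurable_fst
      exact h1.inter h2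
    have hmemP : ∀ᵐ z ∂(α.prod β), z ∈ Icc t T ×ˢ Icc t T :=
      (aux_ae_prod measurableSet_Icc measurableSet_Icc hmα hmβ).mono
        fun z hz => ⟨hz.1, hz.2⟩
    have hcont2 : Continuous fun q : ℝ × (ℝ × ℝ) => W q.1 * (h q.2.1 * h q.2.2) :=
      (hW_cont.comp continuous_fst).mul
        ((hh_cont.comp (continuous_fst.comp continuous_snd)).mul
          (hh_cont.comp (continuous_snd.comp continuous_snd)))
    apply aux_integrable_indicator' hSm hcont2.measurable (CW * (Ch * Ch))
    filter_upwards [aux_ae_prod measurableSet_Icc (measurableSet_Icc.prod measurableSet_Icc)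
      haeΛ' hmemP] with z hz
    rw [abs_mul, abs_mul]
    exact mul_le_mul (Wabs _ hz.1)
      (mul_le_mul (habs _ hz.2.1) (habs _ hz.2.2) (abs_nonneg _) hCh0)
      (mul_nonneg (abs_nonneg _) (abs_nonneg _)) hCW0
  -- a.e. s ≠ u under Λ
  have hΛne : ∀ u : ℝ, ∀ᵐ s ∂Λ, s ≠ u := by
    intro u
    have h0 : Λ {u} = 0 := by
      have h1 : Λ {u} ≤ volume {u} := Measure.le_iff'.1 Measure.restrict_le_self {u}
      simpa [Real.volume_singleton] using le_antisymm h1 (zero_le _)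
    rw [ae_iff]
    apply measure_mono_null _ h0
    intro r hr
    simp only [mem_setOf_eq, not_not] at hr
    simp [hr]
  -- the FTC computation of the W-integrals
  have hWfub : ∀ u ∈ Icc t T, (∫ s, (Ici u).indicator W s ∂Λ) = g T - g u := by
    intro u hu
    have h1 : (∫ s, (Ici u).indicator W s ∂Λ) = ∫ s, (Ioi u).indicator W s ∂Λ := by
      apply integral_congr_ae
      filter_upwards [hΛne u] with s hsu
      simp only [Set.indicator_apply, mem_Ici, mem_Ioi]
      by_cases hus : u ≤ s
      · rw [if_pos hus, if_pos (lt_of_le_of_ne hus (Ne.symm hsu))]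
      · rw [if_neg hus, if_neg (fun hc => hus hc.le)]
    rw [h1, integral_indicator measurableSet_Ioi, hΛ_def,
      Measure.restrict_restrict measurableSet_Ioi]
    have hset : Ioi u ∩ Ioc t T = Ioc u T := by
      ext r
      simp only [mem_inter_iff, mem_Ioi, mem_Ioc]
      constructor
      · rintro ⟨h1, h2, h3⟩; exact ⟨h1, h3⟩
      · rintro ⟨h1, h2⟩; exact ⟨h1, hu.1.trans_lt h1, h2⟩
    rw [hset, ← intervalIntegral.integral_of_le hu.2]
    exact hFTCg u T hu.1 hu.2 le_rfl
  have hWval : (∫ s, W s ∂Λ) = g T - g t := by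
    rw [hΛ_def, ← intervalIntegral.integral_of_le hts]
    exact hFTCg t T le_rfl hts le_rfl
  -- inner identities for the Lebesgue kernels
  have hIkW : ∀ (s : ℝ) (μ : Measure ℝ),
      W s * (∫ u, (Iic s).indicator h u ∂μ) = ∫ u, kW (s, u) ∂μ := by
    intro s μ
    rw [← integral_const_mul]
    apply integral_congr_ae
    apply Eventually.of_forall
    intro u
    simp only [hkW_def, Set.indicator_apply, mem_Iic, mem_setOf_eq]
    by_cases hu : u ≤ s <;> simp [hu]
  have hkW2Inner : ∀ (s : ℝ) (α β : Measure ℝ), IsFiniteMeasure α → IsFiniteMeasure β →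
      W s * ((∫ u, (Iic s).indicator h u ∂α) * (∫ u, (Iic s).indicator h u ∂β))
        = ∫ z, kW2 (s, z) ∂(α.prod β) := by
    intro s α β hα hβ
    haveI := hα; haveI := hβ
    rw [← integral_prod_mul, ← integral_const_mul]
    apply integral_congr_ae
    apply Eventually.of_forall
    intro z
    simp only [hkW2_def, Set.indicator_apply, mem_Iic, mem_setOf_eq]
    by_cases h1 : z.1 ≤ s <;> by_cases h2 : z.2 ≤ s <;> simp [h1, h2]
  -- value of the kW integral
  have hkWval : ∀ (μ : Measure ℝ), IsFiniteMeasure μ → (∀ᵐ u ∂μ, u ∈ Icc t T) →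
      (∫ s, (∫ u, kW (s, u) ∂μ) ∂Λ)
        = g T * (∫ u, h u ∂μ) - ∫ u, g u * h u ∂μ := by
    intro μ hμ hmem
    haveI := hμ
    have hswap := integral_integral_swap (μ := Λ) (ν := μ)
      (f := fun s u => kW (s, u)) (hkWInt μ hμ hmem)
    rw [hswap]
    have e1 : (∫ u, (∫ s, kW (s, u) ∂Λ) ∂μ)
        = ∫ u, (g T * h u - g u * h u) ∂μ := by
      apply integral_congr_ae
      filter_upwards [hmem] with u hu
      have hptw : ∀ s, kW (s, u) = h u * (Ici u).indicator W s := by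
        intro s
        simp only [hkW_def, Set.indicator_apply, mem_Ici, mem_setOf_eq]
        by_cases hus : u ≤ s <;> simp [hus, mul_comm]
      simp_rw [hptw]
      rw [integral_const_mul, hWfub u hu]
      ring
    rw [e1, integral_sub ((hhInt μ hμ hmem).const_mul (g T)) (hghInt μ hμ hmem),
      integral_const_mul]
  -- value of the kW2 integral
  have hkW2val : ∀ (α β : Measure ℝ), IsFiniteMeasure α → IsFiniteMeasure β →
      (∀ᵐ u ∂α, u ∈ Icc t T) → (∀ᵐ u ∂β, u ∈ Icc t T) →
      (∫ s, (∫ z, kW2 (s, z) ∂(α.prod β)) ∂Λ)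
        = g T * ((∫ u, h u ∂α) * (∫ u, h u ∂β)) - ∫ z, kmax z ∂(α.prod β) := by
    intro α β hα hβ hmα hmβ
    haveI := hα; haveI := hβ
    have hswap := integral_integral_swap (μ := Λ) (ν := α.prod β)
      (f := fun s z => kW2 (s, z)) (hkW2Int α β hα hβ hmα hmβ)
    rw [hswap]
    have e1 : (∫ z, (∫ s, kW2 (s, z) ∂Λ) ∂(α.prod β))
        = ∫ z, (g T * (h z.1 * h z.2) - kmax z) ∂(α.prod β) := by
      apply integral_congr_ae
      filter_upwards [aux_ae_prod measurableSet_Icc measurableSet_Icc hmα hmβ] with z hz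
      have hmax : max z.1 z.2 ∈ Icc t T :=
        ⟨le_trans hz.1.1 (le_max_left _ _), max_le hz.1.2 hz.2.2⟩
      have hptw : ∀ s, kW2 (s, z) = (h z.1 * h z.2) * (Ici (max z.1 z.2)).indicator W s := by
        intro s
        simp only [hkW2_def, Set.indicator_apply, mem_Ici, mem_setOf_eq, max_le_iff]
        by_cases h1 : z.1 ≤ s <;> by_cases h2 : z.2 ≤ s <;> simp [h1, h2] <;> ring
      simp_rw [hptw]
      rw [integral_const_mul, hWfub _ hmax]
      simp only [hkmax_def]
      ring
    have hhh : Integrable (fun z : ℝ × ℝ => h z.1 * h z.2) (α.prod β) :=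
      (hhInt α hα hmα).mul_prod (hhInt β hβ hmβ)
    rw [e1, integral_sub (hhh.const_mul (g T)) (hkmaxInt α β hα hβ hmα hmβ),
      integral_const_mul, integral_prod_mul]
  -- the interval integral of D²ν²w as a Λ-integral
  have hIWΛ : (∫ s in t..T, D s ^ 2 * ν s ^ 2 * w s)
      = ∫ s, (d ^ 2 * W s
          + 2 * d * ((∫ u, kW (s, u) ∂μ1) - (∫ u, kW (s, u) ∂μ2))
          + ((∫ z, kW2 (s, z) ∂(μ1.prod μ1))
              - 2 * (∫ z, kW2 (s, z) ∂(μ1.prod μ2))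
              + (∫ z, kW2 (s, z) ∂(μ2.prod μ2)))) ∂Λ := by
    rw [intervalIntegral.integral_of_le hts]
    apply integral_congr_ae
    have haeIoo : ∀ᵐ s ∂Λ, s ∈ Ioo t T := by
      filter_upwards [haeΛ, hΛne T] with s h1 h2
      exact ⟨h1.1, lt_of_le_of_ne h1.2 h2⟩
    filter_upwards [haeIoo] with s hsIoo
    have hsIcc : s ∈ Icc t T := Ioo_subset_Icc_self hsIoo
    have hDs : D s ^ 2 * ν s ^ 2 * w s = (d + (I1 s - I2 s)) ^ 2 * W s := by
      rw [hDf s hsIcc, hwW s hsIoo, mul_pow, hφ s hsIcc, inv_pow]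
      field_simp [(hν_pos s).ne']
    rw [hDs]
    simp only [hI1_def, hI2_def]
    rw [← hIkW s μ1, ← hIkW s μ2, ← hkW2Inner s μ1 μ1 hfin1 hfin1,
      ← hkW2Inner s μ1 μ2 hfin1 hfin2, ← hkW2Inner s μ2 μ2 hfin2 hfin2]
    ring
  have hWIntΛ : Integrable W Λ := by
    apply aux_integrable_of_bound hW_cont.measurable.aestronglyMeasurable CW
    filter_upwards [haeΛ'] with u hu using Wabs u hu
  have hIWval : (∫ s in t..T, D s ^ 2 * ν s ^ 2 * w s)
      = d ^ 2 * (g T - g t)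
        + 2 * d * ((g T * (∫ u, h u ∂μ1) - ∫ u, g u * h u ∂μ1)
            - (g T * (∫ u, h u ∂μ2) - ∫ u, g u * h u ∂μ2))
        + ((g T * ((∫ u, h u ∂μ1) * (∫ u, h u ∂μ1)) - ∫ z, kmax z ∂(μ1.prod μ1))
            - 2 * (g T * ((∫ u, h u ∂μ1) * (∫ u, h u ∂μ2)) - ∫ z, kmax z ∂(μ1.prod μ2))
            + (g T * ((∫ u, h u ∂μ2) * (∫ u, h u ∂μ2)) - ∫ z, kmax z ∂(μ2.prod μ2))) := by
    rw [hIWΛ]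
    have i1 : Integrable (fun s => d ^ 2 * W s) Λ := hWIntΛ.const_mul _
    have iA : Integrable (fun s => ∫ u, kW (s, u) ∂μ1) Λ :=
      (hkWInt μ1 hfin1 hae1).integral_prod_left
    have iB : Integrable (fun s => ∫ u, kW (s, u) ∂μ2) Λ :=
      (hkWInt μ2 hfin2 hae2).integral_prod_left
    have i2 : Integrable
        (fun s => 2 * d * ((∫ u, kW (s, u) ∂μ1) - ∫ u, kW (s, u) ∂μ2)) Λ :=
      (iA.sub iB).const_mul _
    have i12' : Integrable (fun s => d ^ 2 * W s
        + 2 * d * ((∫ u, kW (s, u) ∂μ1) - ∫ u, kW (s, u) ∂μ2)) Λ := i1.add i2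
    have i11 : Integrable (fun s => ∫ z, kW2 (s, z) ∂(μ1.prod μ1)) Λ :=
      (hkW2Int μ1 μ1 hfin1 hfin1 hae1 hae1).integral_prod_left
    have i12 : Integrable (fun s => ∫ z, kW2 (s, z) ∂(μ1.prod μ2)) Λ :=
      (hkW2Int μ1 μ2 hfin1 hfin2 hae1 hae2).integral_prod_left
    have i22 : Integrable (fun s => ∫ z, kW2 (s, z) ∂(μ2.prod μ2)) Λ :=
      (hkW2Int μ2 μ2 hfin2 hfin2 hae2 hae2).integral_prod_left
    have i12m : Integrable (fun s => 2 * (∫ z, kW2 (s, z) ∂(μ1.prod μ2))) Λ :=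
      i12.const_mul 2
    have i3a : Integrable (fun s => (∫ z, kW2 (s, z) ∂(μ1.prod μ1))
        - 2 * (∫ z, kW2 (s, z) ∂(μ1.prod μ2))) Λ := i11.sub i12m
    have i3 : Integrable (fun s => (∫ z, kW2 (s, z) ∂(μ1.prod μ1))
        - 2 * (∫ z, kW2 (s, z) ∂(μ1.prod μ2))
        + (∫ z, kW2 (s, z) ∂(μ2.prod μ2))) Λ := i3a.add i22
    rw [integral_add i12' i3, integral_add i1 i2, integral_add i3a i22,
      integral_sub i11 i12m, integral_const_mul, integral_const_mul,
      integral_const_mul, integral_sub iA iB, hWval,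
      hkWval μ1 hfin1 hae1, hkWval μ2 hfin2 hae2,
      hkW2val μ1 μ1 hfin1 hfin1 hae1 hae1, hkW2val μ1 μ2 hfin1 hfin2 hae1 hae2,
      hkW2val μ2 μ2 hfin2 hfin2 hae2 hae2]
  -- final assembly
  have hI1T : I1 T = ∫ u, h u ∂μ1 := by
    simp only [hI1_def]
    exact hITfull μ1 hfin1 hae1
  have hI2T : I2 T = ∫ u, h u ∂μ2 := by
    simp only [hI2_def]
    exact hITfull μ2 hfin2 hae2
  have hgT2 : (γ T)⁻¹ * D T ^ 2
      = g T * (d + ((∫ u, h u ∂μ1) - ∫ u, h u ∂μ2)) ^ 2 := by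
    rw [hgTf, hI1T, hI2T]
  have hL1 := hDmInt μ1 hfin1 hae1
  have hL2 := hDmInt μ2 hfin2 hae2
  have hJint1 := hJumpInt μ1 hfin1 hae1
  have hJint2 := hJumpInt μ2 hfin2 hae2
  have hp11 := hpair μ1 μ1 hfin1 hfin1 hae1 hae1
  have hp12 := hpair μ1 μ2 hfin1 hfin2 hae1 hae2
  have hp22 := hpair μ2 μ2 hfin2 hfin2 hae2 hae2
  rw [hL1, hL2, hJint1, hJint2, hgT2, ← hgtf, hIWval]
  linear_combination (1/2 : ℝ) * hp11 + (1/2 : ℝ) * hp22 - hp12 - (1/2 : ℝ) * hEsym
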